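/- arXiv:1705.01880 — 5 statements merged into one kernel-verified Lean document; each statement's English description precedes it below -/
import Mathlib

section
/- Let p be an odd prime and let H be the set of 2×2 matrices over Z/p²Z of the form [[1 + p(a-2b), 3p(b-a)],[-pb, 1 - p(a-2b)]] for a, b ∈ Z/p²Z. Then H is a subgroup of GL₂(Z/p²Z), every nonidentity element of H has order p, and H is closed under conjugation by τ = [[1,-3],[1,-2]]. -/
open Matrix

private def Mab {R : Type*} [CommRing R] (q a b : R) : Matrix (Fin 2) (Fin 2) R :=
  !![1 + q * (a - 2 * b), 3 * q * (b - a); -(q * b), 1 - q * (a - 2 * b)]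

private lemma Mab_zero {R : Type*} [CommRing R] (q : R) : Mab q 0 0 = 1 := by
  unfold Mab
  ext i j
  fin_cases i <;> fin_cases j <;> simp [Matrix.one_apply]

private lemma Mab_mul {R : Type*} [CommRing R] {q : R} (hq : q * q = 0) (a b c d : R) :
    Mab q a b * Mab q c d = Mab q (a + c) (b + d) := by
  unfold Mab
  ext i j
  fin_cases i <;> fin_cases j <;> simp [Matrix.mul_apply, Fin.sum_univ_two]
  · linear_combination ((a - 2*b) * (c - 2*d) - 3*(b - a)*d) * hq
  · linear_combination (3*(a - 2*b)*(d - c) - 3*(b - a)*(c - 2*d)) * hq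
  · linear_combination (a*d - b*c) * hq
  · linear_combination ((a - 2*b)*(c - 2*d) - 3*b*(d - c)) * hq

private lemma Mab_pow {R : Type*} [CommRing R] {q : R} (hq : q * q = 0) (a b : R) (n : ℕ) :
    (Mab q a b) ^ n = Mab q (n * a) (n * b) := by
  induction n with
  | zero => simpa using (Mab_zero q).symm
  | succ n ih =>
      rw [pow_succ, ih, Mab_mul hq]
      congr 1
      all_goals push_cast; ring

private lemma Mab_q_eq_one {R : Type*} [CommRing R] {q : R} (hq : q * q = 0) (a b : R) :
    Mab q (q * a) (q * b) = 1 := by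
  unfold Mab
  ext i j
  fin_cases i <;> fin_cases j <;> simp [Matrix.one_apply]
  · linear_combination (a - 2*b) * hq
  · linear_combination 3*(b - a) * hq
  · linear_combination b * hq
  · linear_combination (a - 2*b) * hq

private lemma Mab_conj {R : Type*} [CommRing R] (q a b : R) :
    !![1, -3; 1, -2] * Mab q a b = Mab q (-b) (a - b) * !![1, -3; 1, -2] := by
  unfold Mab
  ext i j
  fin_cases i <;> fin_cases j <;> simp [Matrix.mul_apply, Fin.sum_univ_two] <;> ring

/-- Let `p` be an odd prime and `H` the set of matrices
`[[1 + p(a-2b), 3p(b-a)],[-pb, 1 - p(a-2b)]]` over `ZMod (p^2)`, for `a b : ZMod (p^2)`.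
Then `H` is a subgroup of `GL₂(ZMod (p^2))` (all its elements are invertible, it
contains the identity, and it is closed under products and inverses), every
element of `H` distinct from the identity has order `p`, and `H` is stable under
conjugation by `τ = [[1,-3],[1,-2]]`. -/
theorem H_subgroup_exponent_p_stable_under_tau
    (p : ℕ) (hp : p.Prime) (hodd : Odd p) :
    ∀ H : Set (Matrix (Fin 2) (Fin 2) (ZMod (p ^ 2))),
      H = {M | ∃ a b : ZMod (p ^ 2),
        M = !![1 + (p : ZMod (p ^ 2)) * (a - 2 * b), 3 * (p : ZMod (p ^ 2)) * (b - a);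
               -((p : ZMod (p ^ 2)) * b), 1 - (p : ZMod (p ^ 2)) * (a - 2 * b)]} →
      (∀ M ∈ H, IsUnit M) ∧
      (1 : Matrix (Fin 2) (Fin 2) (ZMod (p ^ 2))) ∈ H ∧
      (∀ M ∈ H, ∀ N ∈ H, M * N ∈ H) ∧
      (∀ M ∈ H, M⁻¹ ∈ H) ∧
      (∀ M ∈ H, M ≠ 1 → orderOf M = p) ∧
      (∀ M ∈ H,
        (!![1, -3; 1, -2] : Matrix (Fin 2) (Fin 2) (ZMod (p ^ 2))) * M *
          (!![1, -3; 1, -2] : Matrix (Fin 2) (Fin 2) (ZMod (p ^ 2)))⁻¹ ∈ H) := by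
  intro H hH
  subst hH
  haveI := Fact.mk hp
  have hq : (p : ZMod (p ^ 2)) * (p : ZMod (p ^ 2)) = 0 := by
    have h := ZMod.natCast_self (p ^ 2)
    push_cast at h
    linear_combination h
  -- membership in terms of `Mab`
  have hmem : ∀ a b : ZMod (p ^ 2), Mab (p : ZMod (p ^ 2)) a b ∈
      {M | ∃ a b : ZMod (p ^ 2),
        M = !![1 + (p : ZMod (p ^ 2)) * (a - 2 * b), 3 * (p : ZMod (p ^ 2)) * (b - a);
               -((p : ZMod (p ^ 2)) * b), 1 - (p : ZMod (p ^ 2)) * (a - 2 * b)]} :=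
    fun a b => ⟨a, b, rfl⟩
  have hform : ∀ M ∈ {M | ∃ a b : ZMod (p ^ 2),
        M = !![1 + (p : ZMod (p ^ 2)) * (a - 2 * b), 3 * (p : ZMod (p ^ 2)) * (b - a);
               -((p : ZMod (p ^ 2)) * b), 1 - (p : ZMod (p ^ 2)) * (a - 2 * b)]},
      ∃ a b : ZMod (p ^ 2), M = Mab (p : ZMod (p ^ 2)) a b := fun M hM => hM
  -- inverses
  have hinv : ∀ a b : ZMod (p ^ 2),
      Mab (p : ZMod (p ^ 2)) a b * Mab (p : ZMod (p ^ 2)) (-a) (-b) = 1 := by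
    intro a b
    rw [Mab_mul hq]
    simpa using Mab_zero (p : ZMod (p ^ 2))
  refine ⟨?_, ?_, ?_, ?_, ?_, ?_⟩
  · -- units
    rintro M hM
    obtain ⟨a, b, rfl⟩ := hform M hM
    have h1 := hinv a b
    have h2 := hinv (-a) (-b)
    simp only [neg_neg] at h2
    exact ⟨⟨_, _, h1, h2⟩, rfl⟩
  · exact ⟨0, 0, (Mab_zero _).symm⟩
  · -- products
    rintro M hM N hN
    obtain ⟨a, b, rfl⟩ := hform M hM
    obtain ⟨c, d, rfl⟩ := hform N hN
    rw [Mab_mul hq]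
    exact hmem _ _
  · -- inverses
    rintro M hM
    obtain ⟨a, b, rfl⟩ := hform M hM
    rw [Matrix.inv_eq_right_inv (hinv a b)]
    exact hmem _ _
  · -- order
    rintro M hM hne
    obtain ⟨a, b, rfl⟩ := hform M hM
    refine orderOf_eq_prime ?_ hne
    rw [Mab_pow hq]
    exact Mab_q_eq_one hq a b
  · -- conjugation by τ
    rintro M hM
    obtain ⟨a, b, rfl⟩ := hform M hM
    have hτ : (!![1, -3; 1, -2] : Matrix (Fin 2) (Fin 2) (ZMod (p ^ 2))) *
        (!![1, -3; 1, -2] : Matrix (Fin 2) (Fin 2) (ZMod (p ^ 2)))⁻¹ = 1 := by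
      apply Matrix.mul_nonsing_inv
      simp [Matrix.det_fin_two_of]
      norm_num
    rw [Mab_conj, mul_assoc, hτ, mul_one]
    exact hmem _ _
end

section
/- Let p be an odd prime. The matrix σ = [[1+p, 1],[2p, 1+p]] over Z/p²Z satisfies σ^p = [[1, p],[0, 1]]; in particular σ has order p². -/
open Matrix

/-- Let `p ≥ 5` be a prime. The matrix `σ = [[1+p, 1],[2p, 1+p]]` over
`ZMod (p^2)` satisfies `σ^p = [[1, p],[0, 1]]`; in particular `σ` has order `p²`. -/
theorem sigma_pth_power_and_order
    (p : ℕ) (hp : p.Prime) (hp5 : 5 ≤ p) :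
    (!![1 + (p : ZMod (p ^ 2)), 1; 2 * (p : ZMod (p ^ 2)), 1 + (p : ZMod (p ^ 2))] :
        Matrix (Fin 2) (Fin 2) (ZMod (p ^ 2))) ^ p =
      !![1, (p : ZMod (p ^ 2)); 0, 1] ∧
    orderOf (!![1 + (p : ZMod (p ^ 2)), 1; 2 * (p : ZMod (p ^ 2)), 1 + (p : ZMod (p ^ 2))] :
        Matrix (Fin 2) (Fin 2) (ZMod (p ^ 2))) = p ^ 2 := by
  haveI : Fact p.Prime := ⟨hp⟩
  set R := ZMod (p ^ 2) with hR
  have hpp : (p : R) * p = 0 := by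
    have h := ZMod.natCast_self (p ^ 2)
    push_cast at h
    calc (p : R) * p = (p : R) ^ 2 := by ring
    _ = 0 := h
  have hpp2 : (p : R) ^ 2 = 0 := by rw [sq]; exact hpp
  set B : Matrix (Fin 2) (Fin 2) R := !![(p : R), 1; 2 * p, (p : R)] with hBdef
  have hσ : (!![1 + (p : R), 1; 2 * (p : R), 1 + (p : R)] : Matrix (Fin 2) (Fin 2) R)
      = B + 1 := by
    rw [hBdef, Matrix.one_fin_two]
    ext i j
    fin_cases i <;> fin_cases j <;> simp <;> ring
  have hcast : ∀ n : ℕ, ((n : ℕ) : Matrix (Fin 2) (Fin 2) R) = !![(n : R), 0; 0, (n : R)] := by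
    intro n
    rw [← Matrix.diagonal_natCast (n := Fin 2) (α := R) n]
    ext i j
    fin_cases i <;> fin_cases j <;> simp [Matrix.diagonal]
  have hB2 : B ^ 2 = !![2 * (p : R), 2 * (p : R); 0, 2 * (p : R)] := by
    rw [sq, hBdef, Matrix.mul_fin_two]
    ext i j
    fin_cases i <;> fin_cases j <;> simp <;> ring_nf! <;> simp [hpp2] <;> ring
  have hB4 : B ^ 4 = 0 := by
    rw [show (4 : ℕ) = 2 + 2 from rfl, pow_add, hB2, Matrix.mul_fin_two]
    ext i j
    fin_cases i <;> fin_cases j <;> simp <;> ring_nf! <;> simp [hpp2] <;> ring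
  have hB2p : B ^ 2 * ((p : ℕ) : Matrix (Fin 2) (Fin 2) R) = 0 := by
    rw [hB2, hcast, Matrix.mul_fin_two]
    ext i j
    fin_cases i <;> fin_cases j <;> simp <;> ring_nf! <;> simp [hpp2] <;> ring
  have hBkp : ∀ k, 2 ≤ k → B ^ k * ((p : ℕ) : Matrix (Fin 2) (Fin 2) R) = 0 := by
    intro k hk
    rcases Nat.exists_eq_add_of_le hk with ⟨m, rfl⟩
    rw [pow_add, mul_assoc, ((Nat.cast_commute p (B ^ m)).symm).eq, ← mul_assoc,
      hB2p, zero_mul]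
  have expand := (Commute.one_right B).add_pow p
  have hsum : (B + 1) ^ p = ∑ m ∈ Finset.range 4,
      B ^ m * 1 ^ (p - m) * ((p.choose m : ℕ) : Matrix (Fin 2) (Fin 2) R) := by
    rw [expand]
    symm
    apply Finset.sum_subset
    · intro x hx
      simp only [Finset.mem_range] at hx ⊢
      omega
    · intro k _ hk4
      simp only [Finset.mem_range, not_lt] at hk4
      have hBk : B ^ k = 0 := by
        rw [show k = 4 + (k - 4) by omega, pow_add, hB4, zero_mul]
      simp [hBk]
  have hpow : (!![1 + (p : R), 1; 2 * (p : R), 1 + (p : R)] : Matrix (Fin 2) (Fin 2) R) ^ p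
      = !![1, (p : R); 0, 1] := by
    rw [hσ, hsum]
    rw [Finset.sum_range_succ, Finset.sum_range_succ, Finset.sum_range_succ,
      Finset.sum_range_one]
    have h2 : B ^ 2 * 1 ^ (p - 2) * ((p.choose 2 : ℕ) : Matrix (Fin 2) (Fin 2) R) = 0 := by
      obtain ⟨m, hm⟩ := hp.dvd_choose_self (by norm_num) (by omega) (k := 2)
      rw [hm, one_pow, mul_one, Nat.cast_mul, ← mul_assoc, hBkp 2 le_rfl, zero_mul]
    have h3 : B ^ 3 * 1 ^ (p - 3) * ((p.choose 3 : ℕ) : Matrix (Fin 2) (Fin 2) R) = 0 := by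
      obtain ⟨m, hm⟩ := hp.dvd_choose_self (by norm_num) (by omega) (k := 3)
      rw [hm, one_pow, mul_one, Nat.cast_mul, ← mul_assoc, hBkp 3 (by norm_num), zero_mul]
    rw [h2, h3, add_zero, add_zero]
    rw [pow_zero, pow_one, Nat.choose_zero_right, Nat.choose_one_right]
    rw [hcast p, hBdef]
    simp only [one_pow, mul_one, one_mul, Nat.cast_one, pow_zero]
    rw [hcast 1, Matrix.mul_fin_two]
    ext i j
    fin_cases i <;> fin_cases j <;> simp <;> ring_nf! <;> simp [hpp2] <;> ring
  refine ⟨hpow, ?_⟩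
  have hpne : (p : R) ≠ 0 := by
    haveI : NeZero (p ^ 2) := ⟨by positivity⟩
    intro h
    rw [ZMod.natCast_eq_zero_iff] at h
    have := Nat.le_of_dvd (by omega) h
    nlinarith
  have hne : (!![1 + (p : R), 1; 2 * (p : R), 1 + (p : R)] : Matrix (Fin 2) (Fin 2) R) ^ p ≠ 1 := by
    rw [hpow, Matrix.one_fin_two]
    intro h
    have h01 := congrFun (congrFun h 0) 1
    simp at h01
    exact hpne h01
  have hupow : ∀ n : ℕ, (!![1, (p : R); 0, 1] : Matrix (Fin 2) (Fin 2) R) ^ n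
      = !![1, n * (p : R); 0, 1] := by
    intro n
    induction n with
    | zero => simp [Matrix.one_fin_two]
    | succ n ih =>
      rw [pow_succ, ih, Matrix.mul_fin_two]
      ext i j
      fin_cases i <;> fin_cases j <;> push_cast <;> simp <;> ring
  have hp2pow : (!![1 + (p : R), 1; 2 * (p : R), 1 + (p : R)] :
      Matrix (Fin 2) (Fin 2) R) ^ (p ^ 2) = 1 := by
    have hh : (!![1 + (p : R), 1; 2 * (p : R), 1 + (p : R)] :
        Matrix (Fin 2) (Fin 2) R) ^ p ^ 2
        = ((!![1 + (p : R), 1; 2 * (p : R), 1 + (p : R)] :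
        Matrix (Fin 2) (Fin 2) R) ^ p) ^ p := by
      rw [← pow_mul]
      congr 1
      ring
    rw [hh, hpow, hupow p, hpp]
    exact Matrix.one_fin_two.symm
  exact orderOf_eq_prime_pow (n := 1) (p := p)
    (by rwa [pow_one]) (by rwa [show 1 + 1 = 2 from rfl])
end

section
/- Let p be an odd prime and consider the group G/H generated by ḡ of order 2 and σ̄ of order p with relation ḡσ̄ḡ⁻¹ = σ̄⁻¹ (dihedral of order 2p), acting on V[p] ≅ (Z/pZ)² where σ̄ acts as [[1,1],[0,1]] and ḡ acts as [[-1,0],[0,1]]. Then H¹(G/H, V[p]) = 0. -/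
/-- Let `p` be an odd prime and `G` a dihedral group of order `2p`, generated by
`g` of order `2` and `σ` of order `p` with `g σ g⁻¹ = σ⁻¹`, acting on
`V = (ZMod p)²` via `σ ↦ [[1,1],[0,1]]` and `g ↦ [[-1,0],[0,1]]`. Then
`H¹(G, V) = 0`: every 1-cocycle is a coboundary. -/
theorem h1_dihedral_vanishes
    (p : ℕ) (hp : p.Prime) (hodd : Odd p)
    (G : Type*) [Group G] (g σ : G)
    (hgen : Subgroup.closure ({g, σ} : Set G) = ⊤)
    (hg : orderOf g = 2) (hσ : orderOf σ = p)
    (hrel : g * σ * g⁻¹ = σ⁻¹)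
    [DistribMulAction G (Fin 2 → ZMod p)]
    (hactσ : ∀ v : Fin 2 → ZMod p, σ • v = ![v 0 + v 1, v 1])
    (hactg : ∀ v : Fin 2 → ZMod p, g • v = ![-(v 0), v 1])
    (Z : G → (Fin 2 → ZMod p))
    (hZ : ∀ a b : G, Z (a * b) = a • Z b + Z a) :
    ∃ v : Fin 2 → ZMod p, ∀ a : G, Z a = a • v - v := by
  haveI : Fact p.Prime := ⟨hp⟩
  have hp2 : p ≠ 2 := by
    rintro rfl
    exact absurd (Nat.odd_iff.mp hodd) (by norm_num)
  have h2ne : (2 : ZMod p) ≠ 0 := by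
    intro h
    have h' : ((2 : ℕ) : ZMod p) = 0 := by exact_mod_cast h
    have := (ZMod.natCast_eq_zero_iff 2 p).mp h'
    exact hp2 ((Nat.prime_dvd_prime_iff_eq hp Nat.prime_two).mp this)
  -- Z 1 = 0
  have hZ1 : Z 1 = 0 := by
    have := hZ 1 1
    simp only [one_mul, one_smul] at this
    exact left_eq_add.mp this
  -- Z a⁻¹ = -(a⁻¹ • Z a)
  have hZinv : ∀ a : G, Z a⁻¹ = -(a⁻¹ • Z a) := by
    intro a
    have := hZ a⁻¹ a
    rw [inv_mul_cancel, hZ1] at this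
    exact eq_neg_of_add_eq_zero_left (by rw [add_comm]; exact this.symm)
  -- second components invariant
  have hσ1 : ∀ w : Fin 2 → ZMod p, (σ • w) 1 = w 1 := fun w => by
    rw [hactσ]; simp
  have hσinv1 : ∀ w : Fin 2 → ZMod p, (σ⁻¹ • w) 1 = w 1 := fun w => by
    have h := hσ1 (σ⁻¹ • w)
    rw [smul_inv_smul] at h
    exact h.symm
  have hg1 : ∀ w : Fin 2 → ZMod p, (g • w) 1 = w 1 := fun w => by
    rw [hactg]; simp
  -- Z g 1 = 0
  have hgg : g * g = 1 := by
    have := pow_orderOf_eq_one g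
    rwa [hg, pow_two] at this
  have hZg1 : Z g 1 = 0 := by
    have h := hZ g g
    rw [hgg, hZ1] at h
    have h1 := congrFun h.symm 1
    simp only [Pi.add_apply, hg1, Pi.zero_apply] at h1
    have : (2 : ZMod p) * Z g 1 = 0 := by linear_combination h1
    exact (mul_eq_zero.mp this).resolve_left h2ne
  -- Z σ 1 = 0
  have hZσ1 : Z σ 1 = 0 := by
    have hrel' : g * σ = σ⁻¹ * g := by
      rw [← hrel]; group
    have h := hZ g σ
    rw [hrel', hZ σ⁻¹ g, hZinv σ] at h
    have h1 := congrFun h 1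
    simp only [Pi.add_apply, Pi.neg_apply, hg1, hσinv1] at h1
    have : (2 : ZMod p) * Z σ 1 = 0 := by linear_combination -h1
    exact (mul_eq_zero.mp this).resolve_left h2ne
  -- candidate v
  set v : Fin 2 → ZMod p := ![-(Z g 0) * (2 : ZMod p)⁻¹, Z σ 0] with hv
  have hvσ : Z σ = σ • v - v := by
    funext i
    fin_cases i
    · simp [hactσ, hv]
    · simp [hactσ, hv, hZσ1]
  have hvg : Z g = g • v - v := by
    funext i
    fin_cases i
    · simp only [hactg, hv]
      show Z g 0 = -(-(Z g 0) * (2 : ZMod p)⁻¹) - (-(Z g 0) * (2 : ZMod p)⁻¹)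
      field_simp
      ring
    · simp [hactg, hv, hZg1]
  -- the set of a satisfying the conclusion is closed under group ops
  have hall : ∀ a : G, a ∈ Subgroup.closure ({g, σ} : Set G) := by
    rw [hgen]; intro a; trivial
  refine ⟨v, fun a => ?_⟩
  induction hall a using Subgroup.closure_induction with
  | mem x hx =>
    rcases hx with rfl | rfl
    · exact hvg
    · exact hvσ
  | one => rw [hZ1, one_smul, sub_self]
  | mul x y _ _ hx hy =>
    rw [hZ x y, hy, hx, mul_smul, smul_sub]
    abel
  | inv x _ hx =>
    rw [hZinv x, hx, smul_sub, inv_smul_smul]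
    abel
end

section
/- Let p be an odd prime, V = (Z/p²Z)², and G ≤ GL₂(Z/p²Z) generated by g = diag(λ, 1) with λ of order dividing p-1, h(1,0) = [[1+p,0],[0,1-p]] and h(0,1) = [[1,p],[0,1]]. Then H¹_loc(G, V) ≠ 0. -/
open Matrix

section

variable {N : ℕ}

/-- The natural action of `GL₂(ZMod N)` on `(ZMod N)²`. -/
def glAct (γ : GL (Fin 2) (ZMod N)) (v : Fin 2 → ZMod N) : Fin 2 → ZMod N :=
  (γ : Matrix (Fin 2) (Fin 2) (ZMod N)).mulVec v

/-- `Z` is a 1-cocycle on the subgroup `G` with values in `(ZMod N)²`. -/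
def IsCocycle (G : Subgroup (GL (Fin 2) (ZMod N))) (Z : G → (Fin 2 → ZMod N)) : Prop :=
  ∀ a b : G, Z (a * b) = glAct (a : GL (Fin 2) (ZMod N)) (Z b) + Z a

/-- `Z` satisfies the local conditions: each value `Z a` is in the image of `a - Id`. -/
def SatisfiesLocalConditions (G : Subgroup (GL (Fin 2) (ZMod N)))
    (Z : G → (Fin 2 → ZMod N)) : Prop :=
  ∀ a : G, ∃ v : Fin 2 → ZMod N, Z a = glAct (a : GL (Fin 2) (ZMod N)) v - v

/-- `Z` is a 1-coboundary. -/
def IsCoboundary (G : Subgroup (GL (Fin 2) (ZMod N)))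
    (Z : G → (Fin 2 → ZMod N)) : Prop :=
  ∃ v : Fin 2 → ZMod N, ∀ a : G, Z a = glAct (a : GL (Fin 2) (ZMod N)) v - v

end

private lemma one_add_sq_zero_pow {R : Type*} [CommRing R] (c : R) (hc : c * c = 0) :
    ∀ n : ℕ, (1 + c) ^ n = 1 + (n : R) * c := by
  intro n
  induction n with
  | zero => simp
  | succ n ih =>
    rw [pow_succ, ih]
    push_cast
    linear_combination (n : R) * hc

/-- Let `p` be an odd prime, `λ ∈ (ZMod p²)ˣ` of order dividing `p-1`, and
`G ≤ GL₂(ZMod p²)` generated by `g = diag(λ, 1)`, `h(1,0) = [[1+p,0],[0,1-p]]`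
and `h(0,1) = [[1,p],[0,1]]`. Then `H¹_loc(G, (ZMod p²)²) ≠ 0`: there is a
cocycle satisfying the local conditions which is not a coboundary. -/
theorem h1loc_nonzero_cyclic_case
    (p : ℕ) (hp : p.Prime) (hodd : Odd p)
    (lam : (ZMod (p ^ 2))ˣ) (hlam : lam ^ (p - 1) = 1)
    (g h₁ h₂ : GL (Fin 2) (ZMod (p ^ 2)))
    (hg : (g : Matrix (Fin 2) (Fin 2) (ZMod (p ^ 2))) =
      !![(lam : ZMod (p ^ 2)), 0; 0, 1])
    (hh₁ : (h₁ : Matrix (Fin 2) (Fin 2) (ZMod (p ^ 2))) =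
      !![1 + (p : ZMod (p ^ 2)), 0; 0, 1 - (p : ZMod (p ^ 2))])
    (hh₂ : (h₂ : Matrix (Fin 2) (Fin 2) (ZMod (p ^ 2))) =
      !![1, (p : ZMod (p ^ 2)); 0, 1]) :
    ∃ Z : (Subgroup.closure ({g, h₁, h₂} : Set (GL (Fin 2) (ZMod (p ^ 2))))) →
        (Fin 2 → ZMod (p ^ 2)),
      IsCocycle _ Z ∧ SatisfiesLocalConditions _ Z ∧ ¬ IsCoboundary _ Z := by
  set R := ZMod (p ^ 2) with hR
  have hp2 : (p : R) * (p : R) = 0 := by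
    have h := ZMod.natCast_self (p ^ 2)
    push_cast at h
    linear_combination h
  haveI : NeZero (p ^ 2) := ⟨pow_ne_zero 2 hp.ne_zero⟩
  have hπ : (p : R) ≠ 0 := by
    intro h
    have h' : ((p : ℕ) : ZMod (p ^ 2)) = 0 := h
    rw [ZMod.natCast_eq_zero_iff] at h'
    have h2 := Nat.le_of_dvd hp.pos h'
    have h3 := hp.two_le
    nlinarith
  -- dichotomy: every element of R is a unit or a multiple of p
  have dich : ∀ x : R, IsUnit x ∨ ∃ t : R, x = (p : R) * t := by
    intro x
    by_cases hd : p ∣ x.val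
    · obtain ⟨c, hc⟩ := hd
      refine Or.inr ⟨(c : R), ?_⟩
      conv_lhs => rw [← ZMod.natCast_zmod_val x]
      rw [hc]; push_cast; ring
    · refine Or.inl ?_
      conv => rw [← ZMod.natCast_zmod_val x]
      rw [ZMod.isUnit_iff_coprime]
      exact (Nat.Coprime.pow_right 2 ((hp.coprime_iff_not_dvd.mpr hd).symm))
  -- if μ = 1 + p t and μ^(p-1) = 1 then p t = 0
  have hmu : ∀ t : R, (1 + (p : R) * t) ^ (p - 1) = 1 → (p : R) * t = 0 := by
    intro t ht
    rw [one_add_sq_zero_pow ((p : R) * t) (by linear_combination t * t * hp2)] at ht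
    have hcast : ((p - 1 : ℕ) : R) = (p : R) - 1 := by
      rw [Nat.cast_sub hp.one_le, Nat.cast_one]
    rw [hcast] at ht
    have h0 : ((p : R) - 1) * ((p : R) * t) = 0 := by linear_combination ht
    linear_combination t * hp2 - h0
  set S : Set (GL (Fin 2) R) := {g, h₁, h₂} with hS
  set G' := Subgroup.closure S with hG'
  -- the invariant
  set P : GL (Fin 2) R → Prop := fun γ =>
    (γ : Matrix (Fin 2) (Fin 2) R) 1 0 = 0 ∧
    (∃ x : R, (γ : Matrix (Fin 2) (Fin 2) R) 0 1 = (p : R) * x) ∧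
    (∃ y : R, (γ : Matrix (Fin 2) (Fin 2) R) 1 1 = 1 + (p : R) * y) ∧
    ((γ : Matrix (Fin 2) (Fin 2) R) 0 0 * (γ : Matrix (Fin 2) (Fin 2) R) 1 1) ^ (p - 1)
      = 1 with hP
  have hlam' : (lam : R) ^ (p - 1) = 1 := by
    have := congrArg (Units.val) hlam
    rwa [Units.val_pow_eq_pow_val, Units.val_one] at this
  have key : ∀ γ ∈ G', P γ := by
    intro γ hγ
    refine Subgroup.closure_induction ?_ ?_ ?_ ?_ hγ
    · intro x hx
      rcases hx with hx | hx | hx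
      · subst hx
        exact ⟨by simp [hg], ⟨0, by simp [hg]⟩, ⟨0, by simp [hg]⟩, by simp [hg, hlam']⟩
      · subst hx
        refine ⟨by simp [hh₁], ⟨0, by simp [hh₁]⟩, ⟨-1, by simp [hh₁]; ring⟩, ?_⟩
        simp only [hh₁]
        rw [show ((!![1 + (p:R), 0; 0, 1 - (p:R)]) 0 0 * (!![1 + (p:R), 0; 0, 1 - (p:R)]) 1 1) = 1 by
          simp; linear_combination -hp2]
        exact one_pow _
      · subst hx
        exact ⟨by simp [hh₂], ⟨1, by simp [hh₂]⟩, ⟨0, by simp [hh₂]⟩, by simp [hh₂]⟩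
    · refine ⟨by simp [Matrix.one_apply], ⟨0, by simp [Matrix.one_apply]⟩,
        ⟨0, by simp [Matrix.one_apply]⟩, by simp [Matrix.one_apply]⟩
    · -- multiplication
      rintro a b _ _ ⟨ha21, ⟨xa, hxa⟩, ⟨ya, hya⟩, hda⟩ ⟨hb21, ⟨xb, hxb⟩, ⟨yb, hyb⟩, hdb⟩
      have hABm : ((a * b : GL (Fin 2) R) : Matrix (Fin 2) (Fin 2) R)
          = (a : Matrix (Fin 2) (Fin 2) R) * (b : Matrix (Fin 2) (Fin 2) R) := rfl
      set A := (a : Matrix (Fin 2) (Fin 2) R)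
      set B := (b : Matrix (Fin 2) (Fin 2) R)
      have e : ∀ i j, ((a * b : GL (Fin 2) R) : Matrix (Fin 2) (Fin 2) R) i j
          = A i 0 * B 0 j + A i 1 * B 1 j := by
        intro i j
        rw [hABm, Matrix.mul_apply, Fin.sum_univ_two]
      refine ⟨?_, ⟨A 0 0 * xb + xa * B 1 1, ?_⟩, ⟨ya + yb + (p : R) * ya * yb, ?_⟩, ?_⟩
      · rw [e, ha21, hb21]; ring
      · rw [e, hxa, hxb]; ring
      · rw [e, ha21, hya, hyb]; ring
      · rw [e, e]
        have heq : (A 0 0 * B 0 0 + A 0 1 * B 1 0) * (A 1 0 * B 0 1 + A 1 1 * B 1 1)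
            = (A 0 0 * A 1 1) * (B 0 0 * B 1 1) := by rw [ha21, hb21]; ring
        rw [heq, mul_pow, hda, hdb, one_mul]
    · -- inverse
      rintro a _ ⟨ha21, ⟨x, hx⟩, ⟨y, hy⟩, hd⟩
      set A := (a : Matrix (Fin 2) (Fin 2) R) with hA
      set B := ((a⁻¹ : GL (Fin 2) R) : Matrix (Fin 2) (Fin 2) R) with hB
      have hABone : A * B = 1 := by
        rw [hA, hB]
        exact_mod_cast a.mul_inv
      have hBAone : B * A = 1 := by
        rw [hA, hB]
        exact_mod_cast a.inv_mul
      have hABe : ∀ i j, A i 0 * B 0 j + A i 1 * B 1 j = (1 : Matrix (Fin 2) (Fin 2) R) i j := by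
        intro i j
        rw [← Fin.sum_univ_two (f := fun k => A i k * B k j), ← Matrix.mul_apply, hABone]
      have hBAe : ∀ i j, B i 0 * A 0 j + B i 1 * A 1 j = (1 : Matrix (Fin 2) (Fin 2) R) i j := by
        intro i j
        rw [← Fin.sum_univ_two (f := fun k => B i k * A k j), ← Matrix.mul_apply, hBAone]
      -- A 0 0 is a unit
      have hdet_unit : IsUnit (A 0 0 * A 1 1) := IsUnit.of_pow_eq_one hd
        (Nat.sub_ne_zero_of_lt hp.one_lt)
      have hA00 : IsUnit (A 0 0) := isUnit_of_mul_isUnit_left hdet_unit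
      -- B 1 0 = 0
      have hB10 : B 1 0 = 0 := by
        have h := hBAe 1 0
        rw [ha21, Matrix.one_apply_ne (by decide)] at h
        have h' : B 1 0 * A 0 0 = 0 := by linear_combination h
        exact (hA00.mul_left_eq_zero).mp h'
      -- A 1 1 * B 1 1 = 1
      have h11 : A 1 1 * B 1 1 = 1 := by
        have h := hABe 1 1
        rw [ha21, Matrix.one_apply_eq] at h
        linear_combination h
      -- A 0 0 * B 0 0 = 1
      have h00 : A 0 0 * B 0 0 = 1 := by
        have h := hABe 0 0
        rw [hB10, Matrix.one_apply_eq] at h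
        linear_combination h
      -- A 0 0 * B 0 1 + A 0 1 * B 1 1 = 0
      have h01 : A 0 0 * B 0 1 + A 0 1 * B 1 1 = 0 := by
        have h := hABe 0 1
        rwa [Matrix.one_apply_ne (by decide)] at h
      refine ⟨hB10, ⟨-(B 0 0 * x * B 1 1), ?_⟩, ⟨-y, ?_⟩, ?_⟩
      · rw [hx] at h01
        linear_combination B 0 0 * h01 - B 0 1 * h00
      · -- B 1 1 = 1 - p y since (1+py)(1-py) = 1 and A11 B11 = 1
        have hA11 : IsUnit (A 1 1) := IsUnit.of_mul_eq_one _ h11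
        have : A 1 1 * B 1 1 = A 1 1 * (1 + (p : R) * (-y)) := by
          rw [h11, hy]
          linear_combination (y * y) * hp2
        have := hA11.mul_left_cancel this
        exact this
      · have hprod : ((A 0 0 * A 1 1) * (B 0 0 * B 1 1)) ^ (p - 1) = 1 := by
          rw [show (A 0 0 * A 1 1) * (B 0 0 * B 1 1) = (A 0 0 * B 0 0) * (A 1 1 * B 1 1) by ring,
            h00, h11, one_mul, one_pow]
        rw [mul_pow, hd, one_mul] at hprod
        exact hprod
  -- the cocycle
  refine ⟨fun γ => ![0, 1 - ((γ : GL (Fin 2) R) : Matrix (Fin 2) (Fin 2) R) 1 1], ?_, ?_, ?_⟩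
  · -- cocycle condition
    intro a b
    obtain ⟨ha21, ⟨xa, hxa⟩, ⟨ya, hya⟩, -⟩ := key a a.2
    obtain ⟨hb21, ⟨xb, hxb⟩, ⟨yb, hyb⟩, -⟩ := key b b.2
    have hABm : (((a * b : G') : GL (Fin 2) R) : Matrix (Fin 2) (Fin 2) R)
        = ((a : GL (Fin 2) R) : Matrix (Fin 2) (Fin 2) R)
          * ((b : GL (Fin 2) R) : Matrix (Fin 2) (Fin 2) R) := rfl
    funext i
    fin_cases i
    · simp only [glAct, Matrix.mulVec, dotProduct, Fin.sum_univ_two, Pi.add_apply,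
        Pi.sub_apply, Pi.zero_apply, Matrix.cons_val_zero, Matrix.cons_val_one,
        Matrix.head_cons, Fin.zero_eta, Fin.mk_one, Fin.isValue, Matrix.mul_apply, hABm]
      rw [hxa, hyb]
      linear_combination xa * yb * hp2
    · simp only [glAct, Matrix.mulVec, dotProduct, Fin.sum_univ_two, Pi.add_apply,
        Pi.sub_apply, Pi.zero_apply, Matrix.cons_val_zero, Matrix.cons_val_one,
        Matrix.head_cons, Fin.zero_eta, Fin.mk_one, Fin.isValue, Matrix.mul_apply, hABm]
      rw [ha21]
      ring
  · -- local conditions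
    intro a
    obtain ⟨ha21, ⟨x, hx⟩, ⟨y, hy⟩, hd⟩ := key a a.2
    rcases dich (((a : GL (Fin 2) R) : Matrix (Fin 2) (Fin 2) R) 0 0 - 1) with hu | ⟨t, ht⟩
    · -- A 0 0 - 1 is a unit
      obtain ⟨u, hu⟩ := hu
      refine ⟨![(↑u⁻¹ : R) * ((p : R) * x), -1], ?_⟩
      have hinv : (↑u⁻¹ : R) * (↑u : R) = 1 := by
        rw [← Units.val_mul, inv_mul_cancel, Units.val_one]
      rw [hu] at hinv
      funext i
      fin_cases i
      · simp only [glAct, Matrix.mulVec, dotProduct, Fin.sum_univ_two, Pi.add_apply,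
        Pi.sub_apply, Pi.zero_apply, Matrix.cons_val_zero, Matrix.cons_val_one,
        Matrix.head_cons, Fin.zero_eta, Fin.mk_one, Fin.isValue, Matrix.mul_apply]
        rw [hx]
        linear_combination (-(p:R) * x) * hinv
      · simp only [glAct, Matrix.mulVec, dotProduct, Fin.sum_univ_two, Pi.add_apply,
        Pi.sub_apply, Pi.zero_apply, Matrix.cons_val_zero, Matrix.cons_val_one,
        Matrix.head_cons, Fin.zero_eta, Fin.mk_one, Fin.isValue, Matrix.mul_apply]
        rw [ha21]
        ring
    · -- A 0 0 = 1 + p t ; then p t = -p y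
      have hA00 : ((a : GL (Fin 2) R) : Matrix (Fin 2) (Fin 2) R) 0 0 = 1 + (p:R) * t := by
        linear_combination ht
      have hAy : ((a : GL (Fin 2) R) : Matrix (Fin 2) (Fin 2) R) 0 0
          * ((a : GL (Fin 2) R) : Matrix (Fin 2) (Fin 2) R) 1 1
          = 1 + (p : R) * (t + y + (p:R) * t * y) := by
        rw [hy, hA00]
        ring
      have h0 : (p : R) * (t + y + (p:R) * t * y) = 0 := by
        apply hmu
        rw [← hAy]
        exact hd
      have hty : (p : R) * t = -((p : R) * y) := by
        linear_combination h0 - (t * y) * hp2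
      rcases dich y with hyu | ⟨s, hs⟩
      · -- y is a unit
        obtain ⟨uy, huy⟩ := hyu
        refine ⟨![-(x * (↑uy⁻¹ : R)), -1], ?_⟩
        have hinv : y * (↑uy⁻¹ : R) = 1 := by
          rw [← huy, ← Units.val_mul, mul_inv_cancel, Units.val_one]
        funext i
        fin_cases i
        · simp only [glAct, Matrix.mulVec, dotProduct, Fin.sum_univ_two, Pi.add_apply,
        Pi.sub_apply, Pi.zero_apply, Matrix.cons_val_zero, Matrix.cons_val_one,
        Matrix.head_cons, Fin.zero_eta, Fin.mk_one, Fin.isValue, Matrix.mul_apply]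
          rw [hx, hA00]
          linear_combination (-(p:R) * x) * hinv + (x * (↑uy⁻¹ : R)) * hty
        · simp only [glAct, Matrix.mulVec, dotProduct, Fin.sum_univ_two, Pi.add_apply,
        Pi.sub_apply, Pi.zero_apply, Matrix.cons_val_zero, Matrix.cons_val_one,
        Matrix.head_cons, Fin.zero_eta, Fin.mk_one, Fin.isValue, Matrix.mul_apply]
          rw [ha21]
          ring
      · -- p y = 0, everything is trivial
        have hpy : (p : R) * y = 0 := by
          rw [hs]
          linear_combination s * hp2
        refine ⟨0, ?_⟩
        have hpt : (p : R) * t = 0 := by rw [hty, hpy]; ring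
        funext i
        fin_cases i
        · simp only [glAct, Matrix.mulVec, dotProduct, Fin.sum_univ_two, Pi.add_apply,
        Pi.sub_apply, Pi.zero_apply, Matrix.cons_val_zero, Matrix.cons_val_one,
        Matrix.head_cons, Fin.zero_eta, Fin.mk_one, Fin.isValue, Matrix.mul_apply]
          ring
        · simp only [glAct, Matrix.mulVec, dotProduct, Fin.sum_univ_two, Pi.add_apply,
        Pi.sub_apply, Pi.zero_apply, Matrix.cons_val_zero, Matrix.cons_val_one,
        Matrix.head_cons, Fin.zero_eta, Fin.mk_one, Fin.isValue, Matrix.mul_apply]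
          rw [hy, hpy, ha21]
          ring
  · -- not a coboundary
    rintro ⟨v, hv⟩
    have hm1 : h₁ ∈ G' := Subgroup.subset_closure (by simp [hS])
    have hm2 : h₂ ∈ G' := Subgroup.subset_closure (by simp [hS])
    have e1 := congrFun (hv ⟨h₁, hm1⟩) 1
    have e2 := congrFun (hv ⟨h₂, hm2⟩) 0
    simp [glAct, Matrix.mulVec, dotProduct, Fin.sum_univ_two, hh₁, hh₂] at e1 e2
    apply hπ
    linear_combination e1 + e2
end

section
/- Let p be an odd prime, V = (Z/p²Z)², and G ≤ GL₂(Z/p²Z) generated by g = [[1,0],[0,-1]], σ = [[1+p,1],[2p,1+p]], and h = [[1+p,0],[0,1-p]]. Then H¹_loc(G, V) ≠ 0. -/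
open Matrix

private lemma mulVec_apply2 {n : ℕ} (M : Matrix (Fin 2) (Fin 2) (ZMod n)) (v : Fin 2 → ZMod n)
    (i : Fin 2) : M.mulVec v i = M i 0 * v 0 + M i 1 * v 1 := by
  simp [Matrix.mulVec, dotProduct, Fin.sum_univ_two]

private lemma pp_zero (p : ℕ) : (p : ZMod (p ^ 2)) * (p : ZMod (p ^ 2)) = 0 := by
  have h : ((p ^ 2 : ℕ) : ZMod (p ^ 2)) = 0 := ZMod.natCast_self _
  push_cast at h
  linear_combination h

private lemma nonunit_dvd (p : ℕ) (hp : p.Prime) (x : ZMod (p ^ 2)) (hx : ¬ IsUnit x) :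
    (p : ZMod (p ^ 2)) ∣ x := by
  haveI : NeZero (p ^ 2) := ⟨pow_ne_zero 2 hp.ne_zero⟩
  have hv : ((x.val : ℕ) : ZMod (p ^ 2)) = x := ZMod.natCast_zmod_val x
  have hnc : ¬ Nat.Coprime x.val (p ^ 2) := by
    intro hc
    exact hx (hv ▸ (ZMod.isUnit_iff_coprime _ _).mpr hc)
  have hdvd : p ∣ x.val := by
    by_contra hnd
    exact hnc (Nat.Coprime.pow_right _ ((hp.coprime_iff_not_dvd).mpr hnd).symm)
  obtain ⟨k, hk⟩ := hdvd
  exact ⟨(k : ZMod (p ^ 2)), by rw [← hv, hk]; push_cast; ring⟩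


private def inv2 (p : ℕ) (a : GL (Fin 2) (ZMod (p ^ 2))) : Prop :=
  ∃ e x z : ZMod (p ^ 2), (e = 1 ∨ e = -1) ∧
    (a : Matrix (Fin 2) (Fin 2) (ZMod (p ^ 2))) 0 0 = 1 + (p : ZMod (p ^ 2)) * x ∧
    (a : Matrix (Fin 2) (Fin 2) (ZMod (p ^ 2))) 1 1 = e + (p : ZMod (p ^ 2)) * z ∧
    (a : Matrix (Fin 2) (Fin 2) (ZMod (p ^ 2))) 1 0
      = 2 * (p : ZMod (p ^ 2)) * ((a : Matrix (Fin 2) (Fin 2) (ZMod (p ^ 2))) 0 1) * e ∧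
    (a : Matrix (Fin 2) (Fin 2) (ZMod (p ^ 2))) 0 0
        * (a : Matrix (Fin 2) (Fin 2) (ZMod (p ^ 2))) 1 1
      - (a : Matrix (Fin 2) (Fin 2) (ZMod (p ^ 2))) 0 1
        * (a : Matrix (Fin 2) (Fin 2) (ZMod (p ^ 2))) 1 0 = e

private lemma inv2_one (p : ℕ) : inv2 p 1 := by
  refine ⟨1, 0, 0, Or.inl rfl, ?_, ?_, ?_, ?_⟩ <;>
    simp [Matrix.one_apply]

private lemma inv2_mul {p : ℕ} {a b : GL (Fin 2) (ZMod (p ^ 2))}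
    (ha : inv2 p a) (hb : inv2 p b) : inv2 p (a * b) := by
  obtain ⟨ea, x, za, hea, hA00, hA11, hA10, hdeta⟩ := ha
  obtain ⟨eb, y, zb, heb, hB00, hB11, hB10, hdetb⟩ := hb
  have hp2 := pp_zero p
  have hea2 : ea * ea = 1 := by rcases hea with rfl | rfl <;> norm_num
  have heb2 : eb * eb = 1 := by rcases heb with rfl | rfl <;> norm_num
  set A : Matrix (Fin 2) (Fin 2) (ZMod (p ^ 2)) := (a : Matrix (Fin 2) (Fin 2) (ZMod (p ^ 2)))
    with hA
  set B : Matrix (Fin 2) (Fin 2) (ZMod (p ^ 2)) := (b : Matrix (Fin 2) (Fin 2) (ZMod (p ^ 2)))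
    with hB
  have hm : ((a * b : GL (Fin 2) (ZMod (p ^ 2))) : Matrix (Fin 2) (Fin 2) (ZMod (p ^ 2)))
      = A * B := by rw [hA, hB]; rfl
  refine ⟨ea * eb, x + y + p * x * y + 2 * (A 0 1) * (B 0 1) * eb,
      2 * (A 0 1) * ea * (B 0 1) + ea * zb + za * eb, ?_, ?_, ?_, ?_, ?_⟩
  · rcases hea with rfl | rfl <;> rcases heb with rfl | rfl <;> norm_num
  · rw [hm]
    simp only [Matrix.mul_apply, Fin.sum_univ_two]
    linear_combination (B 0 0) * hA00 + (1 + p * x) * hB00 + (A 0 1) * hB10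
  · rw [hm]
    simp only [Matrix.mul_apply, Fin.sum_univ_two]
    linear_combination (B 1 1) * hA11 + (B 0 1) * hA10 + (ea + p * za) * hB11
      + (za * zb) * hp2
  · rw [hm]
    simp only [Matrix.mul_apply, Fin.sum_univ_two]
    linear_combination (-2 * B 0 1 * ea * eb * p) * hA00 + (B 1 0) * hA11 + (B 0 0) * hA10
      + (2 * A 0 1 * ea * p) * hB00 + (-2 * A 0 1 * ea * eb * p) * hB11
      + (ea + p * za) * hB10 + (-2 * A 0 1 * ea * p) * heb2
      + (-2 * A 0 1 * ea * eb * zb + 2 * A 0 1 * ea * y - 2 * B 0 1 * ea * eb * x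
          + 2 * B 0 1 * eb * za) * hp2
  · rw [hm]
    simp only [Matrix.mul_apply, Fin.sum_univ_two]
    linear_combination (B 0 0 * B 1 1 - B 0 1 * B 1 0) * hdeta + ea * hdetb

private lemma inv2_inv {p : ℕ} {a : GL (Fin 2) (ZMod (p ^ 2))} (ha : inv2 p a) :
    inv2 p a⁻¹ := by
  obtain ⟨e, x, z, he, hA00, hA11, hA10, hdeta⟩ := ha
  have hp2 := pp_zero p
  have he2 : e * e = 1 := by rcases he with rfl | rfl <;> norm_num
  set A : Matrix (Fin 2) (Fin 2) (ZMod (p ^ 2)) := (a : Matrix (Fin 2) (Fin 2) (ZMod (p ^ 2)))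
    with hA
  set M : Matrix (Fin 2) (Fin 2) (ZMod (p ^ 2)) :=
    !![e * A 1 1, -(e * A 0 1); -(e * A 1 0), e * A 0 0] with hM
  have h1 : A * M = 1 := by
    ext i j
    fin_cases i <;> fin_cases j <;>
      simp [hM, Matrix.mul_apply, Fin.sum_univ_two, Matrix.one_fin_two]
    · linear_combination e * hdeta + he2
    · ring
    · ring
    · linear_combination e * hdeta + he2
  have hMinv : ((a⁻¹ : GL (Fin 2) (ZMod (p ^ 2))) : Matrix (Fin 2) (Fin 2) (ZMod (p ^ 2)))
      = M := by
    calc ((a⁻¹ : GL (Fin 2) (ZMod (p ^ 2))) : Matrix (Fin 2) (Fin 2) (ZMod (p ^ 2)))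
        = ((a⁻¹ : GL (Fin 2) (ZMod (p ^ 2))) : Matrix (Fin 2) (Fin 2) (ZMod (p ^ 2)))
          * (A * M) := by rw [h1, mul_one]
      _ = (((a⁻¹ : GL (Fin 2) (ZMod (p ^ 2))) : Matrix (Fin 2) (Fin 2) (ZMod (p ^ 2)))
          * A) * M := by rw [mul_assoc]
      _ = M := by
          rw [hA, ← Units.val_mul, inv_mul_cancel, Units.val_one, one_mul]
  refine ⟨e, e * z, e * x, he, ?_, ?_, ?_, ?_⟩ <;>
    rw [hMinv] <;> simp [hM]
  · linear_combination e * hA11 + he2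
  · linear_combination e * hA00
  · linear_combination e * hA10
  · linear_combination (e * e) * hdeta + e * he2

/-- Let `p` be an odd prime and `G ≤ GL₂(ZMod p²)` generated by
`g = [[1,0],[0,-1]]`, `σ = [[1+p,1],[2p,1+p]]` and `h = [[1+p,0],[0,1-p]]`.
Then `H¹_loc(G, (ZMod p²)²) ≠ 0`: there is a cocycle satisfying the local
conditions which is not a coboundary. -/
theorem h1loc_nonzero_borel_case
    (p : ℕ) (hp : p.Prime) (hodd : Odd p)
    (g σ h : GL (Fin 2) (ZMod (p ^ 2)))
    (hg : (g : Matrix (Fin 2) (Fin 2) (ZMod (p ^ 2))) = !![1, 0; 0, -1])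
    (hσ : (σ : Matrix (Fin 2) (Fin 2) (ZMod (p ^ 2))) =
      !![1 + (p : ZMod (p ^ 2)), 1; 2 * (p : ZMod (p ^ 2)), 1 + (p : ZMod (p ^ 2))])
    (hh : (h : Matrix (Fin 2) (Fin 2) (ZMod (p ^ 2))) =
      !![1 + (p : ZMod (p ^ 2)), 0; 0, 1 - (p : ZMod (p ^ 2))]) :
    ∃ Z : (Subgroup.closure ({g, σ, h} : Set (GL (Fin 2) (ZMod (p ^ 2))))) →
        (Fin 2 → ZMod (p ^ 2)),
      IsCocycle _ Z ∧ SatisfiesLocalConditions _ Z ∧ ¬ IsCoboundary _ Z := by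
  classical
  have hp2 := pp_zero p
  have hinvg : inv2 p g := by
    refine ⟨-1, 0, 0, Or.inr rfl, ?_, ?_, ?_, ?_⟩ <;> simp [hg]
  have hinvσ : inv2 p σ := by
    refine ⟨1, 1, 1, Or.inl rfl, ?_, ?_, ?_, ?_⟩ <;> simp [hσ]
    linear_combination hp2
  have hinvh : inv2 p h := by
    refine ⟨1, 1, -1, Or.inl rfl, ?_, ?_, ?_, ?_⟩ <;> simp [hh]
    · ring
    · linear_combination -hp2
  have hPall : ∀ a : (Subgroup.closure ({g, σ, h} : Set (GL (Fin 2) (ZMod (p ^ 2))))),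
      inv2 p (a : GL (Fin 2) (ZMod (p ^ 2))) := by
    rintro ⟨a, ha⟩
    refine Subgroup.closure_induction ?_ (inv2_one p)
      (fun u v _ _ hu hv => inv2_mul hu hv) (fun u _ hu => inv2_inv hu) ha
    intro y hy
    simp only [Set.mem_insert_iff, Set.mem_singleton_iff] at hy
    rcases hy with rfl | rfl | rfl
    exacts [hinvg, hinvσ, hinvh]
  refine ⟨fun a => ![2 * ((a : GL (Fin 2) (ZMod (p ^ 2))) :
        Matrix (Fin 2) (Fin 2) (ZMod (p ^ 2))) 0 0 - 2
      - 2 * (p : ZMod (p ^ 2)) * (((a : GL (Fin 2) (ZMod (p ^ 2))) :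
        Matrix (Fin 2) (Fin 2) (ZMod (p ^ 2))) 0 1) ^ 2, 0], ?_, ?_, ?_⟩
  · -- cocycle
    intro a b
    obtain ⟨ea, x, za, hea, hA00, hA11, hA10, hdeta⟩ := hPall a
    obtain ⟨eb, y, zb, heb, hB00, hB11, hB10, hdetb⟩ := hPall b
    have hea2 : ea * ea = 1 := by rcases hea with rfl | rfl <;> norm_num
    have heb2 : eb * eb = 1 := by rcases heb with rfl | rfl <;> norm_num
    set A : Matrix (Fin 2) (Fin 2) (ZMod (p ^ 2)) :=
      ((a : GL (Fin 2) (ZMod (p ^ 2))) : Matrix (Fin 2) (Fin 2) (ZMod (p ^ 2))) with hA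
    set B : Matrix (Fin 2) (Fin 2) (ZMod (p ^ 2)) :=
      ((b : GL (Fin 2) (ZMod (p ^ 2))) : Matrix (Fin 2) (Fin 2) (ZMod (p ^ 2))) with hB
    have hm : (((a * b : _) : GL (Fin 2) (ZMod (p ^ 2))) :
        Matrix (Fin 2) (Fin 2) (ZMod (p ^ 2))) = A * B := by
      rw [hA, hB]; rfl
    funext i
    fin_cases i <;>
      simp [glAct, hm, mulVec_apply2, Matrix.mul_apply, Fin.sum_univ_two]
    · linear_combination
        (-2 * A 0 0 * B 0 1 ^ 2 * (p : ZMod (p ^ 2)) - 4 * A 0 1 * B 0 1 * B 1 1 * (p : ZMod (p ^ 2))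
          - 2 * B 0 1 ^ 2 * (p : ZMod (p ^ 2)) ^ 2 * x) * hA00
        + (-4 * A 0 1 * B 0 1 * (p : ZMod (p ^ 2)) - 4 * A 0 1 * B 0 1 * (p : ZMod (p ^ 2)) ^ 2 * x
          - 2 * A 0 1 ^ 2 * B 1 1 * (p : ZMod (p ^ 2)) - 2 * A 0 1 ^ 2 * eb * (p : ZMod (p ^ 2))
          - 2 * A 0 1 ^ 2 * (p : ZMod (p ^ 2)) ^ 2 * zb) * hB11
        + (2 * A 0 1) * hB10
        + (-2 * A 0 1 ^ 2 * (p : ZMod (p ^ 2))) * heb2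
        + (-4 * A 0 1 * B 0 1 * eb * x - 4 * A 0 1 * B 0 1 * (p : ZMod (p ^ 2)) * x * zb
          - 4 * A 0 1 * B 0 1 * zb - 4 * A 0 1 ^ 2 * eb * zb - 2 * A 0 1 ^ 2 * (p : ZMod (p ^ 2)) * zb ^ 2
          - 2 * B 0 1 ^ 2 * (p : ZMod (p ^ 2)) * x ^ 2 - 2 * B 0 1 ^ 2 * x) * hp2
    · linear_combination
        (2 - 2 * B 0 0 + 2 * B 0 1 ^ 2 * (p : ZMod (p ^ 2))) * hA10
        + (-4 * A 0 1 * ea * (p : ZMod (p ^ 2))) * hB00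
        + (4 * A 0 1 * B 0 1 ^ 2 * ea - 4 * A 0 1 * ea * y) * hp2
  · -- local conditions
    intro a
    obtain ⟨e, x, z, he, hA00, hA11, hA10, hdeta⟩ := hPall a
    set A : Matrix (Fin 2) (Fin 2) (ZMod (p ^ 2)) :=
      ((a : GL (Fin 2) (ZMod (p ^ 2))) : Matrix (Fin 2) (Fin 2) (ZMod (p ^ 2))) with hA
    rcases he with rfl | rfl
    · by_cases hu : IsUnit (A 0 1)
      · obtain ⟨u, hu⟩ := hu
        have huu : A 0 1 * (↑u⁻¹ : ZMod (p ^ 2)) = 1 := by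
          rw [← hu, ← Units.val_mul, mul_inv_cancel, Units.val_one]
        refine ⟨![0, (↑u⁻¹ : ZMod (p ^ 2)) * (2 * (p : ZMod (p ^ 2)) * x
            - 2 * (p : ZMod (p ^ 2)) * (A 0 1) ^ 2)], ?_⟩
        funext i
        fin_cases i <;> simp [glAct, mulVec_apply2]
        · linear_combination 2 * hA00
            + (-(2 * (p : ZMod (p ^ 2)) * x - 2 * (p : ZMod (p ^ 2)) * (A 0 1) ^ 2)) * huu
        · linear_combination
            (-(-2 * A 0 1 ^ 2 * (↑u⁻¹ : ZMod (p ^ 2)) * (p : ZMod (p ^ 2))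
              + 2 * (↑u⁻¹ : ZMod (p ^ 2)) * (p : ZMod (p ^ 2)) * x)) * hA11
            + (-(-2 * A 0 1 ^ 2 * (↑u⁻¹ : ZMod (p ^ 2)) * z
              + 2 * (↑u⁻¹ : ZMod (p ^ 2)) * x * z)) * hp2
      · have hdvd : (p : ZMod (p ^ 2)) ∣ A 0 1 := nonunit_dvd p hp _ hu
        obtain ⟨k, hk⟩ := hdvd
        have hpA01 : (p : ZMod (p ^ 2)) * A 0 1 = 0 := by
          rw [hk, ← mul_assoc, hp2, zero_mul]
        refine ⟨![2, -(2 * (p : ZMod (p ^ 2)) * A 0 1)], ?_⟩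
        funext i
        fin_cases i <;> simp [glAct, mulVec_apply2]
        · ring
        · linear_combination (2 * (p : ZMod (p ^ 2)) * A 0 1) * hA11 + (-2) * hA10
            + (2 * A 0 1 * z) * hp2 + (-4) * hpA01
    · refine ⟨![2, -(2 * (p : ZMod (p ^ 2)) * A 0 1)], ?_⟩
      funext i
      fin_cases i <;> simp [glAct, mulVec_apply2]
      · ring
      · linear_combination (2 * (p : ZMod (p ^ 2)) * A 0 1) * hA11 + (-2) * hA10
          + (2 * A 0 1 * z) * hp2
  · -- not a coboundary
    rintro ⟨v, hv⟩
    have hgm : g ∈ Subgroup.closure ({g, σ, h} : Set (GL (Fin 2) (ZMod (p ^ 2)))) :=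
      Subgroup.subset_closure (by simp)
    have hσm : σ ∈ Subgroup.closure ({g, σ, h} : Set (GL (Fin 2) (ZMod (p ^ 2)))) :=
      Subgroup.subset_closure (by simp)
    have hhm : h ∈ Subgroup.closure ({g, σ, h} : Set (GL (Fin 2) (ZMod (p ^ 2)))) :=
      Subgroup.subset_closure (by simp)
    have E1 := congrFun (hv ⟨g, hgm⟩) 1
    have E2 := congrFun (hv ⟨σ, hσm⟩) 0
    have E3 := congrFun (hv ⟨h, hhm⟩) 0
    simp [glAct, mulVec_apply2, hg, hσ, hh, Matrix.vecHead, Matrix.vecTail] at E1 E2 E3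
    have h4p : (4 : ZMod (p ^ 2)) * (p : ZMod (p ^ 2)) = 0 := by
      linear_combination 2 * E3 - 2 * E2 - E1
    have h4p' : ((4 * p : ℕ) : ZMod (p ^ 2)) = 0 := by push_cast; linear_combination h4p
    rw [ZMod.natCast_eq_zero_iff] at h4p'
    have hpd4 : p ∣ 4 := by
      rw [pow_two] at h4p'
      exact (Nat.mul_dvd_mul_iff_right hp.pos).mp h4p'
    have hpd2 : p ∣ 2 := hp.dvd_of_dvd_pow (show p ∣ 2 ^ 2 by norm_num; exact hpd4)
    have : p = 2 := (Nat.prime_dvd_prime_iff_eq hp Nat.prime_two).mp hpd2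
    rw [this, Nat.odd_iff] at hodd
    norm_num at hodd
end
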